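/- Let u ≤ 0 be measurable on the unit ball B of ℂⁿ and for s ≥ 0 set u_s = max(u+s, 0). If h is holomorphic on B with ∫_B |h|² e^{-pu} dm < ∞ for some 0 < p < 2, then C_p ∫_B |h|² e^{-pu} dm = ∫₀^∞ e^{ps} (∫_B |h|² e^{-2u_s} dm) ds + (1/p) ∫_B |h|² dm, where C_p = 1/p + 1/(2-p). -/

import Mathlib

open MeasureTheory Real

lemma exp_neg_mul_Ioi_aux (a : ℝ) {b : ℝ} (hb : 0 < b) :
    ∫ x in Set.Ioi a, Real.exp (-(b * x)) = Real.exp (-(b * a)) / b := by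
  have h := MeasureTheory.integral_comp_mul_left_Ioi (fun y => Real.exp (-y)) a hb
  simp only [smul_eq_mul] at h
  rw [show (fun x => Real.exp (-(b*x))) = (fun x => Real.exp (-(b*x))) from rfl]
  calc ∫ x in Set.Ioi a, Real.exp (-(b * x))
      = b⁻¹ * ∫ x in Set.Ioi (b * a), Real.exp (-x) := h
    _ = Real.exp (-(b * a)) / b := by rw [integral_exp_neg_Ioi]; ring

lemma keyInt (p : ℝ) (hp0 : 0 < p) (hp2 : p < 2) (x : ℝ) :
    IntegrableOn (fun s => Real.exp (p * s) * Real.exp (-2 * max (x + s) 0))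
      (Set.Ioi (0:ℝ)) := by
  have hcont : Continuous fun s : ℝ => Real.exp (p * s) * Real.exp (-2 * max (x + s) 0) := by
    fun_prop
  refine Integrable.mono' ((exp_neg_integrableOn_Ioi 0 (show (0:ℝ) < 2 - p by linarith)).const_mul
    (Real.exp (-2 * x))) hcont.aestronglyMeasurable ?_
  filter_upwards with s
  rw [Real.norm_of_nonneg (by positivity), ← Real.exp_add, ← Real.exp_add]
  apply Real.exp_le_exp.2
  rcases le_total (x + s) 0 with hc | hc
  · rw [max_eq_right hc]; nlinarith
  · rw [max_eq_left hc]; nlinarith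

lemma key (p : ℝ) (hp0 : 0 < p) (hp2 : p < 2) {x : ℝ} (hx : x ≤ 0) :
    ∫ s in Set.Ioi (0:ℝ), Real.exp (p * s) * Real.exp (-2 * max (x + s) 0)
      = (1/p + 1/(2-p)) * Real.exp (-(p * x)) - 1/p := by
  have hx' : (0:ℝ) ≤ -x := by linarith
  rw [← Set.Ioc_union_Ioi_eq_Ioi hx',
    setIntegral_union (Set.Ioc_disjoint_Ioi le_rfl) measurableSet_Ioi
      ((keyInt p hp0 hp2 x).mono_set (fun s hs => hs.1))
      ((keyInt p hp0 hp2 x).mono_set (fun s hs => lt_of_le_of_lt hx' hs))]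
  have e1 : ∫ s in Set.Ioc (0:ℝ) (-x), Real.exp (p * s) * Real.exp (-2 * max (x + s) 0)
      = (Real.exp (-(p * x)) - 1) / p := by
    rw [setIntegral_congr_fun measurableSet_Ioc
      (g := fun s => Real.exp (p * s)) (fun s hs => by
        have : x + s ≤ 0 := by linarith [hs.2]
        rw [max_eq_right this, mul_zero, Real.exp_zero, mul_one])]
    rw [← intervalIntegral.integral_of_le hx']
    rw [intervalIntegral.integral_comp_mul_left (fun t => Real.exp t) (ne_of_gt hp0)]
    rw [integral_exp, smul_eq_mul, mul_zero, Real.exp_zero,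
      show p * -x = -(p * x) by ring]
    field_simp
  have e2 : ∫ s in Set.Ioi (-x), Real.exp (p * s) * Real.exp (-2 * max (x + s) 0)
      = Real.exp (-(p * x)) / (2 - p) := by
    rw [setIntegral_congr_fun measurableSet_Ioi
       (g := fun s => Real.exp (-2 * x) * Real.exp (-((2-p) * s))) (fun s hs => by
         have hs' : (0:ℝ) ≤ x + s := by
           simp only [Set.mem_Ioi] at hs; linarith
         show Real.exp (p * s) * Real.exp (-2 * max (x + s) 0)
             = Real.exp (-2 * x) * Real.exp (-((2 - p) * s))
         rw [max_eq_left hs', ← Real.exp_add, ← Real.exp_add]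
         congr 1; ring)]
    rw [integral_const_mul, exp_neg_mul_Ioi_aux (-x) (show (0:ℝ) < 2 - p by linarith),
      ← mul_div_assoc, ← Real.exp_add, show (-2 * x) + -((2 - p) * -x) = -(p * x) by ring]
  rw [e1, e2]
  field_simp
  ring

/-- The Euclidean ball of radius `r` centered at the origin in `ℂⁿ`. -/
def euclideanBall (n : ℕ) (r : ℝ) : Set (Fin n → ℂ) :=
  {z | ∑ i, ‖z i‖ ^ 2 < r ^ 2}

theorem stmt1 {n : ℕ} (u : (Fin n → ℂ) → ℝ)
    (hu_meas : Measurable u)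
    (hu_nonpos : ∀ z ∈ euclideanBall n 1, u z ≤ 0)
    (h : (Fin n → ℂ) → ℂ)
    (hh : DifferentiableOn ℂ h (euclideanBall n 1))
    (p : ℝ) (hp0 : 0 < p) (hp2 : p < 2)
    (hint : IntegrableOn (fun z => ‖h z‖ ^ 2 * Real.exp (-(p * u z))) (euclideanBall n 1)) :
    (1 / p + 1 / (2 - p)) *
        ∫ z in euclideanBall n 1, ‖h z‖ ^ 2 * Real.exp (-(p * u z))
      = (∫ s in Set.Ioi (0:ℝ), Real.exp (p * s) *
            ∫ z in euclideanBall n 1, ‖h z‖ ^ 2 * Real.exp (-2 * max (u z + s) 0))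
        + (1 / p) * ∫ z in euclideanBall n 1, ‖h z‖ ^ 2 := by
  have hp2' : (0:ℝ) < 2 - p := by linarith
  set B := euclideanBall n 1 with hBdef
  have hB : MeasurableSet B := by
    have hc : Continuous fun z : Fin n → ℂ => ∑ i, ‖z i‖ ^ 2 := by fun_prop
    exact (isOpen_lt hc continuous_const).measurableSet
  set g : (Fin n → ℂ) → ℝ := fun z => ‖h z‖ ^ 2 with hgdef
  have hg0 : ∀ z, 0 ≤ g z := fun z => by positivity
  have hgmeas : AEStronglyMeasurable g (volume.restrict B) :=
    (((hh.continuousOn.aemeasurable hB).norm.pow_const 2)).aestronglyMeasurable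
  have hexp1 : ∀ z ∈ B, 1 ≤ Real.exp (-(p * u z)) := fun z hz =>
    Real.one_le_exp (by nlinarith [hu_nonpos z hz])
  have hintg : IntegrableOn g B := by
    refine hint.mono' hgmeas ?_
    rw [ae_restrict_iff' hB]
    filter_upwards with z hz
    rw [Real.norm_of_nonneg (hg0 z)]
    have hgz : g z = ‖h z‖ ^ 2 := rfl
    nlinarith [hexp1 z hz, hg0 z, hgz]
  set C : ℝ := 1/p + 1/(2-p) with hC
  have hC0 : 0 < C := by positivity
  have hkeyz : ∀ z ∈ B, (∫ s in Set.Ioi (0:ℝ),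
        Real.exp (p*s) * (g z * Real.exp (-2 * max (u z + s) 0)))
      = g z * (C * Real.exp (-(p * u z)) - 1/p) := by
    intro z hz
    have e : (fun s => Real.exp (p*s) * (g z * Real.exp (-2 * max (u z + s) 0)))
        = fun s => g z * (Real.exp (p*s) * Real.exp (-2 * max (u z + s) 0)) := by
      funext s; ring
    rw [e, integral_const_mul, key p hp0 hp2 (hu_nonpos z hz)]
  set F : ℝ × (Fin n → ℂ) → ℝ :=
    fun q => Real.exp (p*q.1) * (g q.2 * Real.exp (-2 * max (u q.2 + q.1) 0)) with hF
  have hFmeas : AEStronglyMeasurable F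
      ((volume.restrict (Set.Ioi (0:ℝ))).prod (volume.restrict B)) := by
    have h1 : AEStronglyMeasurable (fun q : ℝ × (Fin n → ℂ) => g q.2)
        ((volume.restrict (Set.Ioi (0:ℝ))).prod (volume.restrict B)) := hgmeas.comp_snd
    have h2 : Measurable (fun q : ℝ × (Fin n → ℂ) =>
        Real.exp (p*q.1) * Real.exp (-2 * max (u q.2 + q.1) 0)) := by fun_prop
    have e : F = fun q => (Real.exp (p*q.1) * Real.exp (-2 * max (u q.2 + q.1) 0)) * g q.2 := by
      funext q; rw [hF]; ring
    rw [e]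
    exact h2.aestronglyMeasurable.mul h1
  have hFnorm : ∀ q, ‖F q‖ = F q := fun q => Real.norm_of_nonneg (by
    rw [hF]; positivity)
  have hFint : Integrable F ((volume.restrict (Set.Ioi (0:ℝ))).prod (volume.restrict B)) := by
    rw [integrable_prod_iff' hFmeas]
    constructor
    · filter_upwards with z
      have e : (fun s => F (s, z))
          = fun s => g z * (Real.exp (p*s) * Real.exp (-2 * max (u z + s) 0)) := by
        funext s; rw [hF]; ring
      rw [e]
      exact ((keyInt p hp0 hp2 (u z)).const_mul (g z))
    · refine Integrable.mono' (hint.const_mul C)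
        ((hFmeas.norm.prod_swap).integral_prod_right') ?_
      rw [ae_restrict_iff' hB]
      filter_upwards with z hz
      have e : (∫ s in Set.Ioi (0:ℝ), ‖F (s, z)‖)
          = g z * (C * Real.exp (-(p * u z)) - 1/p) := by
        rw [show (fun s => ‖F (s, z)‖) = fun s => F (s, z) from funext fun s => hFnorm _]
        exact hkeyz z hz
      have hgz : g z = ‖h z‖ ^ 2 := rfl
      have h1p : 1/p ≤ C := by
        rw [hC]
        have : 0 < 1/(2-p) := by positivity
        linarith
      have hmul : 0 ≤ g z * (1/p) := mul_nonneg (hg0 z) (by positivity)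
      have hCe : 1/p ≤ C * Real.exp (-(p * u z)) :=
        h1p.trans (le_mul_of_one_le_right hC0.le (hexp1 z hz))
      rw [e, Real.norm_of_nonneg (mul_nonneg (hg0 z) (sub_nonneg.2 hCe)), ← hgz]
      have expand : g z * (C * Real.exp (-(p * u z)) - 1/p)
          = C * (g z * Real.exp (-(p * u z))) - g z * (1/p) := by ring
      linarith [hmul, expand]
  have hswap := integral_integral_swap
    (f := fun s z => Real.exp (p*s) * (g z * Real.exp (-2 * max (u z + s) 0))) hFint
  have t1 : (∫ s in Set.Ioi (0:ℝ), Real.exp (p * s) *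
        ∫ z in B, g z * Real.exp (-2 * max (u z + s) 0))
      = C * (∫ z in B, g z * Real.exp (-(p * u z))) - (1/p) * ∫ z in B, g z := by
    have e1 : (∫ s in Set.Ioi (0:ℝ), Real.exp (p * s) *
          ∫ z in B, g z * Real.exp (-2 * max (u z + s) 0))
        = ∫ s in Set.Ioi (0:ℝ), ∫ z in B,
            Real.exp (p*s) * (g z * Real.exp (-2 * max (u z + s) 0)) := by
      refine integral_congr_ae (Filter.Eventually.of_forall fun s => ?_)
      exact (integral_const_mul _ _).symm
    rw [e1, hswap]
    have e2 : (∫ z in B, ∫ s in Set.Ioi (0:ℝ),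
          Real.exp (p*s) * (g z * Real.exp (-2 * max (u z + s) 0)))
        = ∫ z in B, (C * (g z * Real.exp (-(p * u z))) - (1/p) * g z) := by
      refine setIntegral_congr_fun hB fun z hz => ?_
      rw [hkeyz z hz]; ring
    rw [e2, integral_sub (hint.const_mul C) (hintg.const_mul (1/p)),
      integral_const_mul, integral_const_mul]
  rw [t1]
  ring
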